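/- Fix an integer n ≥ 1, masses m_1, …, m_n > 0 and radii s_1, …, s_n > 0, and set T_min = 2π (∑_{i=1}^n m_i/s_i³)^{-1/2}. If z : ℝ → ℝ is a nonconstant twice differentiable solution of z''(t) = −∑_{i=1}^n m_i z(t)/(s_i² + z(t)²)^{3/2} and T > 0 satisfies z(t + T) = z(t) for all t ∈ ℝ, then T > T_min. -/

import Mathlib

open Set Filter Topology

/-- Sturm-type comparison: on an interval where `z > 0` with zero boundary values,
the length exceeds `π/√K`. -/
lemma sturm_interval (K : ℝ) (hK : 0 < K) (q z : ℝ → ℝ)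
    (hz : Differentiable ℝ z) (hz' : Differentiable ℝ (deriv z))
    (hode : ∀ t, deriv (deriv z) t = -(q t * z t))
    (hq : ∀ t, z t ≠ 0 → q t < K)
    (a b : ℝ) (hab : a < b) (hza : z a = 0) (hzb : z b = 0)
    (hpos : ∀ t ∈ Set.Ioo a b, 0 < z t) :
    Real.pi / Real.sqrt K < b - a := by
  set ω := Real.sqrt K with hω
  have hω0 : 0 < ω := Real.sqrt_pos.2 hK
  have hω2 : ω * ω = K := Real.mul_self_sqrt hK.le
  by_contra hcon
  push_neg at hcon
  -- so b - a ≤ π / ω, hence ω * (b - a) ≤ π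
  have hle : ω * (b - a) ≤ Real.pi := by
    rw [le_div_iff₀ hω0] at hcon
    nlinarith
  set W : ℝ → ℝ := fun t => deriv z t * Real.sin (ω * (t - a)) -
      z t * (ω * Real.cos (ω * (t - a))) with hW
  have hWd : ∀ t, HasDerivAt W ((K - q t) * (z t * Real.sin (ω * (t - a)))) t := by
    intro t
    have hu : HasDerivAt (fun t : ℝ => ω * (t - a)) ω t := by
      simpa using ((hasDerivAt_id t).sub_const a).const_mul ω
    have hsin : HasDerivAt (fun t : ℝ => Real.sin (ω * (t - a)))
        (Real.cos (ω * (t - a)) * ω) t := (Real.hasDerivAt_sin _).comp t hu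
    have hcos : HasDerivAt (fun t : ℝ => Real.cos (ω * (t - a)))
        (-Real.sin (ω * (t - a)) * ω) t := (Real.hasDerivAt_cos _).comp t hu
    have h1 : HasDerivAt (deriv z) (-(q t * z t)) t := by
      have := (hz' t).hasDerivAt
      rwa [hode t] at this
    have h2 := (h1.mul hsin).sub (((hz t).hasDerivAt).mul (hcos.const_mul ω))
    refine h2.congr_deriv ?_
    rw [← hω2]
    ring
  have hcont : ContinuousOn W (Icc a b) :=
    (fun t _ => ((hWd t).differentiableAt.continuousAt.continuousWithinAt))
  have hmono : StrictMonoOn W (Icc a b) := by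
    apply strictMonoOn_of_deriv_pos (convex_Icc a b) hcont
    intro x hx
    rw [interior_Icc] at hx
    rw [(hWd x).deriv]
    have hzx := hpos x hx
    have hqx := hq x (ne_of_gt hzx)
    have hsx : 0 < Real.sin (ω * (x - a)) := by
      apply Real.sin_pos_of_pos_of_lt_pi
      · exact mul_pos hω0 (by linarith [hx.1])
      · calc ω * (x - a) < ω * (b - a) := by
              apply mul_lt_mul_of_pos_left _ hω0; linarith [hx.2]
          _ ≤ Real.pi := hle
    have h1 : 0 < K - q x := by linarith
    exact mul_pos h1 (mul_pos hzx hsx)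
  have hWa : W a = 0 := by simp [hW, hza]
  have hWb : W b ≤ 0 := by
    have hsb : 0 ≤ Real.sin (ω * (b - a)) := by
      apply Real.sin_nonneg_of_nonneg_of_le_pi _ hle
      exact mul_nonneg hω0.le (by linarith)
    have hdb : deriv z b ≤ 0 := by
      have hsl : Tendsto (slope z b) (𝓝[<] b) (𝓝 (deriv z b)) := by
        have h := hasDerivAt_iff_tendsto_slope.1 (hz b).hasDerivAt
        exact h.mono_left (nhdsWithin_mono b fun x hx => ne_of_lt hx)
      refine le_of_tendsto hsl ?_
      filter_upwards [Ioo_mem_nhdsLT_of_mem (⟨hab, le_refl b⟩ : b ∈ Set.Ioc a b)] with t ht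
      rw [slope_def_field, hzb]
      rw [div_nonpos_iff]
      left
      exact ⟨by simpa using (hpos t ht).le, by linarith [ht.2]⟩
    simp only [hW, hzb]
    calc deriv z b * Real.sin (ω * (b - a)) - 0 * (ω * Real.cos (ω * (b - a)))
        = deriv z b * Real.sin (ω * (b - a)) := by ring
      _ ≤ 0 := mul_nonpos_of_nonpos_of_nonneg hdb hsb
  have := hmono (left_mem_Icc.2 hab.le) (right_mem_Icc.2 hab.le) hab
  rw [hWa] at this
  linarith

/-- Around a point where a continuous function is positive, with zeros on both
sides, there is a maximal open interval of positivity with zero endpoints. -/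
lemma zero_interval (z : ℝ → ℝ) (hc : Continuous z) (b : ℝ) (hb : 0 < z b)
    (l r : ℝ) (hl : l ≤ b) (hzl : z l = 0) (hr : b ≤ r) (hzr : z r = 0) :
    ∃ t₀ t₁, l ≤ t₀ ∧ t₀ < b ∧ b < t₁ ∧ t₁ ≤ r ∧ z t₀ = 0 ∧ z t₁ = 0 ∧
      ∀ t ∈ Set.Ioo t₀ t₁, 0 < z t := by
  have hS : IsClosed {t : ℝ | z t = 0} := isClosed_eq hc continuous_const
  set A := {t : ℝ | z t = 0} ∩ Icc l b with hA
  have hAne : A.Nonempty := ⟨l, hzl, le_refl l, hl⟩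
  have hAbdd : BddAbove A := ⟨b, fun x hx => hx.2.2⟩
  have hAcl : IsClosed A := hS.inter isClosed_Icc
  set t₀ := sSup A with ht₀
  have ht₀A : t₀ ∈ A := hAcl.csSup_mem hAne hAbdd
  have ht₀b : t₀ < b := by
    rcases lt_or_eq_of_le ht₀A.2.2 with h | h
    · exact h
    · exfalso; have := ht₀A.1; rw [h] at this; simp only [Set.mem_setOf_eq] at this; linarith
  set B := {t : ℝ | z t = 0} ∩ Icc b r with hB
  have hBne : B.Nonempty := ⟨r, hzr, hr, le_refl r⟩
  have hBbdd : BddBelow B := ⟨b, fun x hx => hx.2.1⟩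
  have hBcl : IsClosed B := hS.inter isClosed_Icc
  set t₁ := sInf B with ht₁
  have ht₁B : t₁ ∈ B := hBcl.csInf_mem hBne hBbdd
  have hbt₁ : b < t₁ := by
    rcases lt_or_eq_of_le ht₁B.2.1 with h | h
    · exact h
    · exfalso; have := ht₁B.1; rw [← h] at this; simp only [Set.mem_setOf_eq] at this; linarith
  refine ⟨t₀, t₁, ht₀A.2.1, ht₀b, hbt₁, ht₁B.2.2, ht₀A.1, ht₁B.1, ?_⟩
  intro t ht
  by_contra h
  push_neg at h
  rcases le_total t b with htb | hbt
  · -- t ∈ (t₀, b], zero in [t, b] contradicts sSup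
    have h0 : (0 : ℝ) ∈ Icc (z t) (z b) := ⟨h, hb.le⟩
    obtain ⟨u, hu, hzu⟩ := intermediate_value_Icc htb hc.continuousOn h0
    have huA : u ∈ A := ⟨hzu, le_trans ht₀A.2.1 (le_trans ht.1.le hu.1), hu.2⟩
    have : u ≤ t₀ := le_csSup hAbdd huA
    linarith [ht.1, hu.1]
  · have h0 : (0 : ℝ) ∈ Icc (z t) (z b) := ⟨h, hb.le⟩
    obtain ⟨u, hu, hzu⟩ := intermediate_value_Icc' hbt hc.continuousOn h0
    have huB : u ∈ B := ⟨hzu, hu.1, le_trans hu.2 (le_trans ht.2.le ht₁B.2.2)⟩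
    have : t₁ ≤ u := csInf_le hBbdd huB
    linarith [ht.2, hu.2]

lemma mono_periodic_const (g : ℝ → ℝ) (hm : Monotone g) (T : ℝ) (hT : 0 < T)
    (hper : ∀ t, g (t + T) = g t) : ∀ a b : ℝ, g a = g b := by
  have hP : Function.Periodic g T := hper
  have key : ∀ a b : ℝ, a ≤ b → g a = g b := by
    intro a b hab
    refine le_antisymm (hm hab) ?_
    obtain ⟨n, hn⟩ := exists_nat_ge ((b - a) / T)
    have hbn : b ≤ a + n * T := by
      rw [div_le_iff₀ hT] at hn; linarith
    calc g b ≤ g (a + n * T) := hm hbn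
      _ = g a := (hP.nat_mul n) a
  intro a b
  rcases le_total a b with h | h
  · exact key a b h
  · exact (key b a h).symm

lemma no_signed_solution (q z : ℝ → ℝ) (hz : Differentiable ℝ z)
    (hz' : Differentiable ℝ (deriv z))
    (hode : ∀ t, deriv (deriv z) t = -(q t * z t)) (hqpos : ∀ t, 0 < q t)
    (T : ℝ) (hT : 0 < T) (hper : ∀ t, z (t + T) = z t)
    (hnc : ∃ a b : ℝ, z a ≠ z b) (hsign : ∀ t, z t ≤ 0) : False := by
  have hmono : Monotone (deriv z) := by
    apply monotone_of_deriv_nonneg hz'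
    intro t
    rw [hode t]
    have := mul_nonpos_of_nonneg_of_nonpos (hqpos t).le (hsign t)
    linarith
  have hdper : ∀ t, deriv z (t + T) = deriv z t := by
    intro t
    have hfun : (fun s => z (s + T)) = z := funext hper
    calc deriv z (t + T) = deriv (fun s => z (s + T)) t := (deriv_comp_add_const z T t).symm
      _ = deriv z t := by rw [hfun]
  have hconst := mono_periodic_const (deriv z) hmono T hT hdper
  set c := deriv z 0 with hc
  have hg : ∀ x y : ℝ, z x - c * x = z y - c * y := by
    apply is_const_of_deriv_eq_zero (f := fun t => z t - c * t)
    · exact hz.sub (differentiable_id.const_mul c)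
    · intro x
      have : deriv (fun t => z t - c * t) x = deriv z x - c := by
        have h1 : HasDerivAt (fun t : ℝ => z t - c * t) (deriv z x - c) x := by
          exact ((hz x).hasDerivAt.sub ((hasDerivAt_id x).const_mul c)).congr_deriv (by ring)
        exact h1.deriv
      rw [this, hconst x 0, ← hc]
      ring
  have hc0 : c = 0 := by
    have h1 := hg T 0
    have h2 := hper 0
    rw [zero_add] at h2
    have : c * T = 0 := by linarith [h1, h2]
    exact (mul_eq_zero.1 this).resolve_right (ne_of_gt hT)
  obtain ⟨a, b, hab⟩ := hnc
  apply hab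
  have := hg a b
  rw [hc0] at this
  linarith

/-- Any period of a nonconstant solution of the Sitnikov equation exceeds
`T_min = 2π (∑ m_i/s_i³)^{-1/2}`. -/
theorem sitnikov_period_gt_Tmin
    (n : ℕ) (hn : 1 ≤ n) (m s : Fin n → ℝ)
    (hm : ∀ i, 0 < m i) (hs : ∀ i, 0 < s i)
    (Tmin : ℝ) (hTmin : Tmin = 2 * Real.pi * (∑ i, m i / s i ^ 3) ^ (-(1 / 2) : ℝ))
    (z : ℝ → ℝ) (hz : Differentiable ℝ z) (hz' : Differentiable ℝ (deriv z))
    (hode : ∀ t : ℝ, deriv (deriv z) t =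
      -∑ i, m i * z t / (s i ^ 2 + z t ^ 2) ^ ((3 : ℝ) / 2))
    (hnc : ∃ t₁ t₂ : ℝ, z t₁ ≠ z t₂)
    (T : ℝ) (hT : 0 < T) (hper : ∀ t : ℝ, z (t + T) = z t) :
    T > Tmin := by
  have hne : Nonempty (Fin n) := ⟨⟨0, hn⟩⟩
  set K : ℝ := ∑ i, m i / s i ^ 3 with hKdef
  have hK : 0 < K := Finset.sum_pos
    (fun i _ => div_pos (hm i) (pow_pos (hs i) 3)) Finset.univ_nonempty
  set q : ℝ → ℝ := fun t => ∑ i, m i / (s i ^ 2 + z t ^ 2) ^ ((3 : ℝ) / 2) with hqdef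
  have hden : ∀ (i : Fin n) (x : ℝ), (0:ℝ) < (s i ^ 2 + x ^ 2) ^ ((3 : ℝ) / 2) := by
    intro i x
    apply Real.rpow_pos_of_pos
    have := hs i
    positivity
  have hqpos : ∀ t, 0 < q t := fun t =>
    Finset.sum_pos (fun i _ => div_pos (hm i) (hden i (z t))) Finset.univ_nonempty
  have hode' : ∀ t, deriv (deriv z) t = -(q t * z t) := by
    intro t
    rw [hode t]
    congr 1
    rw [hqdef, Finset.sum_mul]
    exact Finset.sum_congr rfl fun i _ => by ring
  have hqK : ∀ t, z t ≠ 0 → q t < K := by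
    intro t hzt
    apply Finset.sum_lt_sum_of_nonempty Finset.univ_nonempty
    intro i _
    have hpow : ((s i ^ 2 : ℝ)) ^ ((3 : ℝ) / 2) = s i ^ 3 := by
      rw [← Real.rpow_natCast (s i) 2, ← Real.rpow_mul (hs i).le,
        ← Real.rpow_natCast (s i) 3]
      norm_num
    have hlt : s i ^ 3 < (s i ^ 2 + z t ^ 2) ^ ((3 : ℝ) / 2) := by
      rw [← hpow]
      apply Real.rpow_lt_rpow (sq_nonneg _) _ (by norm_num)
      have hz2 : 0 < z t ^ 2 :=
        lt_of_le_of_ne (sq_nonneg _) (Ne.symm (pow_ne_zero 2 hzt))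
      linarith
    exact div_lt_div_of_pos_left (hm i) (pow_pos (hs i) 3) hlt
  -- facts about w = -z
  set w : ℝ → ℝ := fun t => -z t with hwdef
  have hwz : Differentiable ℝ w := hz.neg
  have hwd : deriv w = fun t => -deriv z t := funext fun t => deriv.neg
  have hw' : Differentiable ℝ (deriv w) := by rw [hwd]; exact hz'.neg
  have hwode : ∀ t, deriv (deriv w) t = -(q t * w t) := by
    intro t
    rw [hwd]
    have : deriv (fun t => -deriv z t) t = -(deriv (deriv z) t) := deriv.neg
    rw [this, hode' t, hwdef]
    ring
  -- z takes positive and negative values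
  obtain ⟨p, hp⟩ : ∃ p, 0 < z p := by
    by_contra h
    push_neg at h
    exact no_signed_solution q z hz hz' hode' hqpos T hT hper hnc h
  obtain ⟨pn, hpn⟩ : ∃ p, z p < 0 := by
    by_contra h
    push_neg at h
    apply no_signed_solution q w hwz hw' hwode hqpos T hT
      (fun t => by simp [hwdef, hper t])
      (by obtain ⟨a, b, hab⟩ := hnc; exact ⟨a, b, fun hh => hab (by simpa [hwdef] using hh)⟩)
      (fun t => by simp [hwdef]; exact h t)
  -- a zero of z
  obtain ⟨c, hc⟩ : ∃ c, z c = 0 := by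
    obtain ⟨c, hc⟩ := intermediate_value_univ pn p hz.continuous ⟨hpn.le, hp.le⟩
    exact ⟨c, hc⟩
  have hP : Function.Periodic z T := hper
  have hzk : ∀ k : ℤ, z (c + k * T) = 0 := by
    intro k
    have := (hP.int_mul k) c
    rw [this, hc]
  -- first interval around p
  have hlp : c + (⌊(p - c) / T⌋ : ℝ) * T ≤ p := by
    have h1 : (⌊(p - c) / T⌋ : ℝ) * T ≤ (p - c) / T * T :=
      mul_le_mul_of_nonneg_right (Int.floor_le _) hT.le
    rw [div_mul_cancel₀ _ (ne_of_gt hT)] at h1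
    linarith
  have hrp : p ≤ c + (⌈(p - c) / T⌉ : ℝ) * T := by
    have h1 : (p - c) / T * T ≤ (⌈(p - c) / T⌉ : ℝ) * T :=
      mul_le_mul_of_nonneg_right (Int.le_ceil _) hT.le
    rw [div_mul_cancel₀ _ (ne_of_gt hT)] at h1
    linarith
  obtain ⟨t₀, t₁, hlt₀, ht₀p, hpt₁, ht₁r, hzt₀, hzt₁, hposI⟩ :=
    zero_interval z hz.continuous p hp _ _ hlp (hzk _) hrp (hzk _)
  have ht₀t₁ : t₀ < t₁ := lt_trans ht₀p hpt₁
  -- shift pn into [t₀, t₀ + T)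
  set c' : ℝ := pn - (⌊(pn - t₀) / T⌋ : ℝ) * T with hc'def
  have hzc' : z c' = z pn := hP.sub_int_mul_eq _
  have ht₀c' : t₀ ≤ c' := by
    have h1 : (⌊(pn - t₀) / T⌋ : ℝ) * T ≤ (pn - t₀) / T * T :=
      mul_le_mul_of_nonneg_right (Int.floor_le _) hT.le
    rw [div_mul_cancel₀ _ (ne_of_gt hT)] at h1
    rw [hc'def]; linarith
  have hc'T : c' < t₀ + T := by
    have h1 : (pn - t₀) / T < (⌊(pn - t₀) / T⌋ : ℝ) + 1 := Int.lt_floor_add_one _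
    have h2 : pn - t₀ < ((⌊(pn - t₀) / T⌋ : ℝ) + 1) * T := by
      rw [← div_lt_iff₀ hT]; exact h1
    rw [hc'def]; nlinarith
  have ht₁c' : t₁ < c' := by
    by_contra hcon
    push_neg at hcon
    have : 0 ≤ z c' := by
      rcases eq_or_lt_of_le ht₀c' with h0 | h0
      · rw [← h0]; exact le_of_eq hzt₀.symm
      rcases eq_or_lt_of_le hcon with h1 | h1
      · rw [h1]; exact le_of_eq hzt₁.symm
      · exact (hposI c' ⟨h0, h1⟩).le
    rw [hzc'] at this
    linarith
  -- second interval around c' for w = -z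
  have hwc' : 0 < w c' := by rw [hwdef]; simp; rw [hzc']; exact hpn
  have hwt₁ : w t₁ = 0 := by rw [hwdef]; simp [hzt₁]
  have hwT : w (t₀ + T) = 0 := by rw [hwdef]; simp; rw [hper t₀]; exact hzt₀
  obtain ⟨u₀, u₁, ht₁u₀, hu₀c', hc'u₁, hu₁T, hwu₀, hwu₁, hwposI⟩ :=
    zero_interval w hwz.continuous c' hwc' t₁ (t₀ + T) ht₁c'.le hwt₁ hc'T.le hwT
  -- apply the Sturm comparison on both intervals
  have hS1 : Real.pi / Real.sqrt K < t₁ - t₀ :=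
    sturm_interval K hK q z hz hz' hode' hqK t₀ t₁ ht₀t₁ hzt₀ hzt₁ hposI
  have hS2 : Real.pi / Real.sqrt K < u₁ - u₀ := by
    apply sturm_interval K hK q w hwz hw' hwode _ u₀ u₁
      (lt_trans hu₀c' hc'u₁) hwu₀ hwu₁ hwposI
    intro t hwt
    apply hqK t
    rw [hwdef] at hwt
    simpa using hwt
  -- arithmetic
  have hsqK : 0 < Real.sqrt K := Real.sqrt_pos.2 hK
  have hTminEq : Tmin = Real.pi / Real.sqrt K + Real.pi / Real.sqrt K := by
    rw [hTmin]
    rw [Real.rpow_neg hK.le, ← Real.sqrt_eq_rpow]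
    field_simp
    ring
  rw [gt_iff_lt, hTminEq]
  linarith [hS1, hS2, ht₁u₀, hu₁T]
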